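/- Theorem 11 (invariance of converting): let G be a canonical finite digraph. Then every iterated line digraph L^j(G) (j = 0, 1, 2, …) is canonical — equivalently, no complicated vertex ever arises under consecutive converting — if and only if every directed walk in G is holonomic. -/

import Mathlib

universe u

/-- The line digraph of a digraph `G`: vertices are the edges of `G`. -/
def lineDigraph {V : Type u} (G : Digraph V) : Digraph {e : V × V // G.Adj e.1 e.2} where
  Adj e f := e.1.2 = f.1.1

instance {V : Type u} (G : Digraph V) [Fintype V] [DecidableRel G.Adj] :
    Fintype {e : V × V // G.Adj e.1 e.2} :=
  Subtype.fintype _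

instance {V : Type u} (G : Digraph V) [DecidableEq V] :
    DecidableRel (lineDigraph G).Adj :=
  fun e f => inferInstanceAs (Decidable (e.1.2 = f.1.1))

/-- The finset of (directed) edges of `G`. -/
def edgeFinset {V : Type u} (G : Digraph V) [Fintype V] [DecidableRel G.Adj] :
    Finset (V × V) :=
  Finset.univ.filter (fun p => G.Adj p.1 p.2)

/-- The indegree of a vertex. -/
def indeg {V : Type u} (G : Digraph V) [Fintype V] [DecidableRel G.Adj] (v : V) : ℕ :=
  (Finset.univ.filter (fun u => G.Adj u v)).card

/-- The outdegree of a vertex. -/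
def outdeg {V : Type u} (G : Digraph V) [Fintype V] [DecidableRel G.Adj] (v : V) : ℕ :=
  (Finset.univ.filter (fun w => G.Adj v w)).card

/-- The cyclomatic number `ν(G) = |E| - |V| + 1`, as an integer. -/
def cyclomatic {V : Type u} (G : Digraph V) [Fintype V] [DecidableRel G.Adj] : ℤ :=
  ((edgeFinset G).card : ℤ) - (Fintype.card V : ℤ) + 1

/-- A directed walk of length `k` in `G`. -/
def IsWalk {V : Type u} (G : Digraph V) {k : ℕ} (w : Fin (k + 1) → V) : Prop :=
  ∀ i : Fin k, G.Adj (w i.castSucc) (w i.succ)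

instance {V : Type u} (G : Digraph V) [DecidableRel G.Adj] {k : ℕ} :
    DecidablePred (IsWalk G (k := k)) :=
  fun w => inferInstanceAs (Decidable (∀ i : Fin k, G.Adj (w i.castSucc) (w i.succ)))

/-- A bundled finite digraph. -/
structure FinDigraph where
  V : Type
  [fin : Fintype V]
  [deq : DecidableEq V]
  G : Digraph V
  [dec : DecidableRel G.Adj]

attribute [instance] FinDigraph.fin FinDigraph.deq FinDigraph.dec

/-- One straight-converting step: the bundled line digraph. -/
def FinDigraph.line (H : FinDigraph) : FinDigraph where
  V := {e : H.V × H.V // H.G.Adj e.1 e.2}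
  G := lineDigraph H.G

/-- The `j`-fold iterated line digraph. -/
def FinDigraph.iterLine (H : FinDigraph) : ℕ → FinDigraph
  | 0 => H
  | j + 1 => (H.iterLine j).line

/-- Canonical: every vertex simple. -/
def FinDigraph.Canonical (H : FinDigraph) : Prop :=
  ∀ v : H.V, indeg H.G v ≤ 1 ∨ outdeg H.G v ≤ 1

/-- Contains a complicated vertex. -/
def FinDigraph.HasComplicated (H : FinDigraph) : Prop :=
  ∃ v : H.V, 2 ≤ indeg H.G v ∧ 2 ≤ outdeg H.G v

/-- An `l₃₁`-interval of length `ℓ`. -/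
def IsL31 {V : Type u} (G : Digraph V) [Fintype V] [DecidableRel G.Adj] {ℓ : ℕ}
    (w : Fin (ℓ + 1) → V) : Prop :=
  IsWalk G w ∧ 2 ≤ indeg G (w 0) ∧ 2 ≤ outdeg G (w (Fin.last ℓ)) ∧
    ∀ i : Fin (ℓ + 1), 0 < (i : ℕ) → (i : ℕ) < ℓ →
      indeg G (w i) = 1 ∧ outdeg G (w i) = 1

/-- A directed cycle of length `k`. -/
def IsCycle {V : Type u} (G : Digraph V) {k : ℕ} (w : Fin (k + 1) → V) : Prop :=
  IsWalk G w ∧ w 0 = w (Fin.last k) ∧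
    ∀ i j : Fin (k + 1), (i : ℕ) < k → (j : ℕ) < k → w i = w j → i = j

/-- `G` has a contour: a directed cycle with both an entry edge and an exit edge. -/
def HasContour {V : Type u} (G : Digraph V) : Prop :=
  ∃ (k : ℕ) (w : Fin (k + 2) → V), IsCycle G (k := k + 1) w ∧
    (∃ a b : V, G.Adj a b ∧ (∃ i, w i = b) ∧
      ¬ ∃ i : Fin (k + 1), w i.castSucc = a ∧ w i.succ = b) ∧
    (∃ a b : V, G.Adj a b ∧ (∃ i, w i = a) ∧
      ¬ ∃ i : Fin (k + 1), w i.castSucc = a ∧ w i.succ = b)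

section AuxChain

variable {V : Type u}

/-- Overlap relation between two walks of the same length. -/
def ChainRel (G : Digraph V) {j : ℕ} (p q : Fin (j + 1) → V) : Prop :=
  (∀ i : Fin j, p i.succ = q i.castSucc) ∧ G.Adj (p (Fin.last j)) (q (Fin.last j))

lemma fin_one_eq_zero {n : ℕ} (h : n = 0) (i : Fin (n + 1)) : i = 0 := by
  apply Fin.ext
  have := i.isLt
  simp only [Fin.val_zero]
  omega

lemma glue_succ {G : Digraph V} {j : ℕ} {p q : Fin (j + 1) → V}
    (h : ChainRel G p q) (i : Fin (j + 1)) :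
    (Fin.snoc p (q (Fin.last j)) : Fin (j + 2) → V) i.succ = q i := by
  rcases Fin.eq_castSucc_or_eq_last i with ⟨k, rfl⟩ | rfl
  · rw [Fin.succ_castSucc, Fin.snoc_castSucc, h.1 k]
  · rw [Fin.succ_last, Fin.snoc_last]

lemma glue_isWalk {G : Digraph V} {j : ℕ} {p q : Fin (j + 1) → V}
    (hp : IsWalk G p) (h : ChainRel G p q) :
    IsWalk G (Fin.snoc p (q (Fin.last j)) : Fin (j + 2) → V) := by
  intro i
  rw [Fin.snoc_castSucc, glue_succ h]
  rcases Fin.eq_castSucc_or_eq_last i with ⟨k, rfl⟩ | rfl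
  · rw [← h.1 k]
    exact hp k
  · exact h.2

lemma chainRel_head {G : Digraph V} : ∀ {j : ℕ} {q p : Fin (j + 1) → V},
    IsWalk G q → ChainRel G q p → G.Adj (q 0) (p 0)
  | 0, q, p, _, h => by
      have h0 : (Fin.last 0) = (0 : Fin (0 + 1)) := fin_one_eq_zero rfl _
      have h2 := h.2
      rw [h0] at h2
      exact h2
  | j + 1, q, p, hq, h => by
      have h0 := hq 0
      rwa [Fin.castSucc_zero, h.1 0, Fin.castSucc_zero] at h0

lemma prefix_isWalk {G : Digraph V} {j : ℕ} {u : Fin (j + 2) → V} (hu : IsWalk G u) :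
    IsWalk G (fun i : Fin (j + 1) => u i.castSucc) := by
  intro i
  show G.Adj (u i.castSucc.castSucc) (u i.succ.castSucc)
  rw [← Fin.succ_castSucc]
  exact hu i.castSucc

lemma suffix_isWalk {G : Digraph V} {j : ℕ} {u : Fin (j + 2) → V} (hu : IsWalk G u) :
    IsWalk G (fun i : Fin (j + 1) => u i.succ) := by
  intro i
  show G.Adj (u i.castSucc.succ) (u i.succ.succ)
  rw [Fin.succ_castSucc]
  exact hu i.succ

lemma chainRel_prefix_suffix {G : Digraph V} {j : ℕ} {u : Fin (j + 2) → V}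
    (hu : IsWalk G u) :
    ChainRel G (fun i : Fin (j + 1) => u i.castSucc) (fun i : Fin (j + 1) => u i.succ) := by
  refine ⟨fun i => ?_, hu (Fin.last j)⟩
  show u i.succ.castSucc = u i.castSucc.succ
  rw [Fin.succ_castSucc]

/-- The gluing map from edges of `L^j(G)` (i.e. vertices of `L^{j+1}(G)`) to
walks of length `j+1`. -/
def glueMap (H : FinDigraph) {j : ℕ}
    (f : (H.iterLine j).V ≃ {w : Fin (j + 1) → H.V // IsWalk H.G w})
    (hf : ∀ v v', (H.iterLine j).G.Adj v v' ↔ ChainRel H.G (f v).1 (f v').1)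
    (e : (H.iterLine (j + 1)).V) : {w : Fin (j + 2) → H.V // IsWalk H.G w} :=
  ⟨Fin.snoc (f e.1.1).1 ((f e.1.2).1 (Fin.last j)),
    glue_isWalk (f e.1.1).2 ((hf _ _).mp e.2)⟩

lemma glueMap_coe (H : FinDigraph) {j : ℕ}
    (f : (H.iterLine j).V ≃ {w : Fin (j + 1) → H.V // IsWalk H.G w})
    (hf : ∀ v v', (H.iterLine j).G.Adj v v' ↔ ChainRel H.G (f v).1 (f v').1)
    (e : (H.iterLine (j + 1)).V) :
    (glueMap H f hf e).1
      = (Fin.snoc (f e.1.1).1 ((f e.1.2).1 (Fin.last j)) : Fin (j + 2) → H.V) := rfl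

/-- Structural correspondence: vertices of `L^j(G)` are walks of length `j` in `G`,
and adjacency corresponds to the overlap relation. -/
lemma iterLine_equiv (H : FinDigraph) :
    ∀ j : ℕ, ∃ f : (H.iterLine j).V ≃ {w : Fin (j + 1) → H.V // IsWalk H.G w},
      ∀ v v' : (H.iterLine j).V,
        (H.iterLine j).G.Adj v v' ↔ ChainRel H.G (f v).1 (f v').1
  | 0 => by
    refine ⟨⟨fun v => ⟨fun _ => v, fun i => i.elim0⟩, fun w => w.1 0,
      fun v => rfl, fun w => ?_⟩, fun v v' => ?_⟩
    · apply Subtype.ext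
      funext i
      have : i = 0 := fin_one_eq_zero rfl i
      rw [this]
    · constructor
      · intro h; exact ⟨fun i => i.elim0, h⟩
      · intro h; exact h.2
  | j + 1 => by
    obtain ⟨f, hf⟩ := iterLine_equiv H j
    have hinj : Function.Injective (glueMap H f hf) := by
      rintro e e' h
      have h' : (glueMap H f hf e).1 = (glueMap H f hf e').1 := congrArg Subtype.val h
      have r1 := (hf _ _).mp e.2
      have r2 := (hf _ _).mp e'.2
      have ha : f e.1.1 = f e'.1.1 := by
        apply Subtype.ext; funext i
        have := congrFun h' i.castSucc
        rwa [glueMap_coe, glueMap_coe, Fin.snoc_castSucc, Fin.snoc_castSucc] at this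
      have hb : f e.1.2 = f e'.1.2 := by
        apply Subtype.ext; funext i
        have := congrFun h' i.succ
        rwa [glueMap_coe, glueMap_coe, glue_succ r1, glue_succ r2] at this
      exact Subtype.ext (Prod.ext (f.injective ha) (f.injective hb))
    have hsurj : Function.Surjective (glueMap H f hf) := by
      rintro ⟨u, hu⟩
      refine ⟨⟨(f.symm ⟨_, prefix_isWalk hu⟩, f.symm ⟨_, suffix_isWalk hu⟩), ?_⟩, ?_⟩
      · refine (hf _ _).mpr ?_
        rw [Equiv.apply_symm_apply, Equiv.apply_symm_apply]
        exact chainRel_prefix_suffix hu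
      · apply Subtype.ext
        show (Fin.snoc (f (f.symm _)).1 ((f (f.symm _)).1 (Fin.last j))
          : Fin (j + 2) → H.V) = u
        rw [Equiv.apply_symm_apply, Equiv.apply_symm_apply]
        funext i
        rcases Fin.eq_castSucc_or_eq_last i with ⟨k, rfl⟩ | rfl
        · rw [Fin.snoc_castSucc]
        · rw [Fin.snoc_last]
          exact congrArg u (Fin.succ_last j)
    refine ⟨Equiv.ofBijective _ ⟨hinj, hsurj⟩, fun e e' => ?_⟩
    show e.1.2 = e'.1.1 ↔ ChainRel H.G (glueMap H f hf e).1 (glueMap H f hf e').1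
    have r1 := (hf _ _).mp e.2
    have r2 := (hf _ _).mp e'.2
    constructor
    · intro h
      constructor
      · intro i
        rw [glueMap_coe, glueMap_coe, glue_succ r1, Fin.snoc_castSucc, h]
      · rw [glueMap_coe, glueMap_coe, Fin.snoc_last, Fin.snoc_last, h]
        exact r2.2
    · intro h
      apply f.injective
      apply Subtype.ext; funext i
      have := h.1 i
      rwa [glueMap_coe, glueMap_coe, glue_succ r1, Fin.snoc_castSucc] at this

lemma indeg_eq_card_subtype (G : Digraph V) [Fintype V] [DecidableRel G.Adj]
    (v : V) : indeg G v = Fintype.card {u // G.Adj u v} := by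
  rw [indeg, Fintype.card_subtype]

lemma outdeg_eq_card_subtype (G : Digraph V) [Fintype V] [DecidableRel G.Adj]
    (v : V) : outdeg G v = Fintype.card {u // G.Adj v u} := by
  rw [outdeg, Fintype.card_subtype]

lemma indeg_transfer (H : FinDigraph) {j : ℕ}
    (f : (H.iterLine j).V ≃ {w : Fin (j + 1) → H.V // IsWalk H.G w})
    (hf : ∀ v v', (H.iterLine j).G.Adj v v' ↔ ChainRel H.G (f v).1 (f v').1)
    (v : (H.iterLine j).V) :
    indeg (H.iterLine j).G v = indeg H.G ((f v).1 0) := by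
  rw [indeg_eq_card_subtype, indeg_eq_card_subtype]
  refine Fintype.card_congr (Equiv.ofBijective
    (fun x => ⟨(f x.1).1 0, chainRel_head (f x.1).2 ((hf _ _).mp x.2)⟩) ⟨?_, ?_⟩)
  · rintro ⟨a, ha⟩ ⟨b, hb⟩ h
    have h0 : (f a).1 0 = (f b).1 0 := congrArg Subtype.val h
    have ra := (hf a v).mp ha
    have rb := (hf b v).mp hb
    have hab : f a = f b := by
      apply Subtype.ext; funext i
      rcases Fin.eq_zero_or_eq_succ i with rfl | ⟨k, rfl⟩
      · exact h0
      · rw [ra.1 k, rb.1 k]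
    exact Subtype.ext (f.injective hab)
  · rintro ⟨u, hu⟩
    have hpw : IsWalk H.G (f v).1 := (f v).2
    set p := (f v).1 with hp
    set q : Fin (j + 1) → H.V := Fin.cons u (fun k : Fin j => p k.castSucc) with hq
    have hqw : IsWalk H.G q := by
      intro i
      rw [hq, Fin.cons_succ]
      rcases Fin.eq_zero_or_eq_succ i.castSucc with h0 | ⟨k, hk⟩
      · rw [h0, Fin.cons_zero]
        exact hu
      · rw [hk, Fin.cons_succ]
        exact hpw k
    have hrel : ChainRel H.G q p := by
      refine ⟨fun i => by rw [hq, Fin.cons_succ], ?_⟩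
      rcases Fin.eq_zero_or_eq_succ (Fin.last j) with h0 | ⟨k, hk⟩
      · rw [h0, hq, Fin.cons_zero]
        exact hu
      · rw [hk, hq, Fin.cons_succ]
        exact hpw k
    refine ⟨⟨f.symm ⟨q, hqw⟩, (hf _ _).mpr ?_⟩, ?_⟩
    · rw [Equiv.apply_symm_apply]
      exact hrel
    · apply Subtype.ext
      show (f (f.symm ⟨q, hqw⟩)).1 0 = u
      rw [Equiv.apply_symm_apply]
      show q 0 = u
      rw [hq]
      exact Fin.cons_zero _ _

lemma outdeg_transfer (H : FinDigraph) {j : ℕ}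
    (f : (H.iterLine j).V ≃ {w : Fin (j + 1) → H.V // IsWalk H.G w})
    (hf : ∀ v v', (H.iterLine j).G.Adj v v' ↔ ChainRel H.G (f v).1 (f v').1)
    (v : (H.iterLine j).V) :
    outdeg (H.iterLine j).G v = outdeg H.G ((f v).1 (Fin.last j)) := by
  rw [outdeg_eq_card_subtype, outdeg_eq_card_subtype]
  refine Fintype.card_congr (Equiv.ofBijective
    (fun x => ⟨(f x.1).1 (Fin.last j), ((hf _ _).mp x.2).2⟩) ⟨?_, ?_⟩)
  · rintro ⟨a, ha⟩ ⟨b, hb⟩ h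
    have h0 : (f a).1 (Fin.last j) = (f b).1 (Fin.last j) := congrArg Subtype.val h
    have ra := (hf v a).mp ha
    have rb := (hf v b).mp hb
    have hab : f a = f b := by
      apply Subtype.ext; funext i
      rcases Fin.eq_castSucc_or_eq_last i with ⟨k, rfl⟩ | rfl
      · rw [← ra.1 k, ← rb.1 k]
      · exact h0
    exact Subtype.ext (f.injective hab)
  · rintro ⟨x, hx⟩
    have hpw : IsWalk H.G (f v).1 := (f v).2
    set p := (f v).1 with hp
    set q : Fin (j + 1) → H.V := Fin.snoc (fun k : Fin j => p k.succ) x with hq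
    have hqx : ∀ i : Fin (j + 1), i = Fin.last j → q i = x := by
      rintro i rfl
      rw [hq]
      exact Fin.snoc_last _ _
    have hqc : ∀ k : Fin j, q k.castSucc = p k.succ := by
      intro k
      rw [hq]
      exact Fin.snoc_castSucc _ _ _
    have hqw : IsWalk H.G q := by
      intro i
      rw [hqc i]
      rcases Fin.eq_castSucc_or_eq_last i.succ with ⟨k, hk⟩ | hk
      · rw [hk, hqc k]
        exact hpw k
      · rw [hk, hqx _ rfl]
        exact hx
    have hrel : ChainRel H.G p q := by
      refine ⟨fun i => (hqc i).symm, ?_⟩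
      rw [hqx _ rfl]
      exact hx
    refine ⟨⟨f.symm ⟨q, hqw⟩, (hf _ _).mpr ?_⟩, ?_⟩
    · rw [Equiv.apply_symm_apply]
      exact hrel
    · apply Subtype.ext
      show (f (f.symm ⟨q, hqw⟩)).1 (Fin.last j) = x
      rw [Equiv.apply_symm_apply]
      exact hqx _ rfl

end AuxChain

/-- Theorem 11: for a canonical finite digraph `G`, every iterated
line digraph `L^j(G)` is canonical iff every directed walk in `G` is holonomic. -/
theorem iterLine_canonical_iff_holonomic (H : FinDigraph) (hcan : H.Canonical) :
    (∀ j : ℕ, (H.iterLine j).Canonical) ↔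
    (∀ (k : ℕ) (w : Fin (k + 1) → H.V), IsWalk H.G w →
      ¬ ∃ i j : Fin (k + 1), i < j ∧
        2 ≤ indeg H.G (w i) ∧ 2 ≤ outdeg H.G (w j)) := by
  constructor
  · intro hall k w hw
    rintro ⟨a, b, hab, hin, hout⟩
    have hab' : (a : ℕ) < (b : ℕ) := hab
    have hbk : (b : ℕ) < k + 1 := b.isLt
    set m := (b : ℕ) - (a : ℕ) with hm
    have hbound : ∀ t : ℕ, t < m + 1 → (a : ℕ) + t < k + 1 := by omega
    set p : Fin (m + 1) → H.V := fun t => w ⟨(a : ℕ) + t, hbound t t.isLt⟩ with hpdef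
    have hpw : IsWalk H.G p := by
      intro t
      have htm : (t : ℕ) < m := t.isLt
      have h := hw ⟨(a : ℕ) + t, by omega⟩
      have e1 : ((⟨(a : ℕ) + t, by omega⟩ : Fin k).castSucc)
          = ⟨(a : ℕ) + (t.castSucc : ℕ), hbound _ t.castSucc.isLt⟩ := by
        apply Fin.ext
        simp only [Fin.coe_castSucc]
      have e2 : ((⟨(a : ℕ) + t, by omega⟩ : Fin k).succ)
          = ⟨(a : ℕ) + (t.succ : ℕ), hbound _ t.succ.isLt⟩ := by
        apply Fin.ext
        simp only [Fin.val_succ]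
        omega
      rw [e1, e2] at h
      exact h
    obtain ⟨f, hf⟩ := iterLine_equiv H m
    have hc := hall m (f.symm ⟨p, hpw⟩)
    rw [indeg_transfer H f hf, outdeg_transfer H f hf, Equiv.apply_symm_apply] at hc
    have hcoe : (⟨p, hpw⟩ : {w : Fin (m + 1) → H.V // IsWalk H.G w}).1 = p := rfl
    rw [hcoe] at hc
    have e0 : p 0 = w a := by
      show w _ = w a
      congr 1
    have el : p (Fin.last m) = w b := by
      show w _ = w b
      congr 1
      all_goals
        apply Fin.ext
        simp only [Fin.val_last]
        omega
    rw [e0, el] at hc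
    rcases hc with hc | hc <;> omega
  · intro hhol j
    cases j with
    | zero => exact hcan
    | succ j =>
      intro v
      obtain ⟨f, hf⟩ := iterLine_equiv H (j + 1)
      by_contra hcon
      push_neg at hcon
      obtain ⟨h1, h2⟩ := hcon
      rw [indeg_transfer H f hf] at h1
      rw [outdeg_transfer H f hf] at h2
      refine hhol (j + 1) (f v).1 (f v).2 ⟨0, Fin.last (j + 1), ?_, h1, h2⟩
      rw [Fin.lt_def]
      simp
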